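/- Let Ω ⊊ ℝⁿ be an (ε,δ)-domain. If Q is a dyadic cube in ℝⁿ with ℓ(Q) < δ, then there is a point z in the interior of Q such that d_Ω(z) ≥ ε·ℓ(Q)/32. -/

import Mathlib

open Set Metric MeasureTheory
open scoped ENNReal

noncomputable section

abbrev Eu (n : ℕ) := EuclideanSpace ℝ (Fin n)

variable {n : ℕ}

/-- Distance to the boundary of `Ω`. -/
def dOm (Ω : Set (Eu n)) (x : Eu n) : ℝ := Metric.infDist x (frontier Ω)

/-- A (Lipschitz) curve in `Ω` from `x` to `y`, parametrized on `[0,1]`. -/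
structure IsCurve (Ω : Set (Eu n)) (γ : ℝ → Eu n) (x y : Eu n) : Prop where
  lipschitz : ∃ K, LipschitzOnWith K γ (Set.Icc 0 1)
  source : γ 0 = x
  target : γ 1 = y
  mem : ∀ t ∈ Set.Icc (0:ℝ) 1, γ t ∈ Ω

/-- Arclength of the portion of the curve between parameters `t₁` and `t₂`. -/
def arclengthOn (γ : ℝ → Eu n) (t₁ t₂ : ℝ) : ℝ := ∫ t in t₁..t₂, ‖deriv γ t‖

/-- Arclength of a curve parametrized on `[0,1]`. -/
def arclength (γ : ℝ → Eu n) : ℝ := arclengthOn γ 0 1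

/-- Line integral `∫_γ g ds` of a function `g` along a curve `γ`. -/
def lineIntegral (g : Eu n → ℝ) (γ : ℝ → Eu n) : ℝ := ∫ t in (0:ℝ)..1, g (γ t) * ‖deriv γ t‖

/-- The quasi-hyperbolic distance `k_Ω`. -/
def kDist (Ω : Set (Eu n)) (x y : Eu n) : ℝ :=
  sInf { r | ∃ γ : ℝ → Eu n, IsCurve Ω γ x y ∧ r = lineIntegral (fun z => (dOm Ω z)⁻¹) γ }

/-- Quasi-hyperbolic distance from a point to a set. -/
def kDistSet (Ω : Set (Eu n)) (x : Eu n) (S : Set (Eu n)) : ℝ := sInf (kDist Ω x '' S)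

/-- The distance `j_Ω`. -/
def jDist (Ω : Set (Eu n)) (x y : Eu n) : ℝ :=
  (1/2) * Real.log ((1 + dist x y / dOm Ω x) * (1 + dist x y / dOm Ω y))

/-- A quasi-hyperbolic geodesic from `x` to `y` in `Ω`. -/
def IsQHGeodesic (Ω : Set (Eu n)) (γ : ℝ → Eu n) (x y : Eu n) : Prop :=
  IsCurve Ω γ x y ∧ lineIntegral (fun z => (dOm Ω z)⁻¹) γ = kDist Ω x y

/-- `Ω` is a domain: a nonempty proper open connected subset of `ℝⁿ`. -/
def IsDom (Ω : Set (Eu n)) : Prop := IsOpen Ω ∧ IsConnected Ω ∧ Ω ≠ Set.univ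

/-- `(ε,δ)`-domain in the sense of Jones. -/
def IsEpsDeltaDomain (Ω : Set (Eu n)) (ε δ : ℝ) : Prop :=
  ∀ x ∈ Ω, ∀ y ∈ Ω, dist x y < δ → ∃ γ : ℝ → Eu n, IsCurve Ω γ x y ∧
    arclength γ ≤ ε⁻¹ * dist x y ∧
    ∀ t ∈ Set.Icc (0:ℝ) 1, dOm Ω (γ t) ≥ ε * (dist (γ t) x * dist (γ t) y) / dist x y

/-- Closed axis-parallel cube with lower corner `a` and sidelength `l`. -/
def cube (a : Eu n) (l : ℝ) : Set (Eu n) := {x : Eu n | ∀ i, x i ∈ Set.Icc (a i) (a i + l)}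

/-- `cube a l` is a dyadic cube. -/
def IsDyadic (a : Eu n) (l : ℝ) : Prop :=
  ∃ (k : ℤ) (m : Fin n → ℤ), l = 2 ^ (-k) ∧ ∀ i, a i = (m i : ℝ) * 2 ^ (-k)

/-- The dyadic cube of generation `k` indexed by `m`. -/
def dyCube (k : ℤ) (m : Fin n → ℤ) : Set (Eu n) :=
  {x : Eu n | ∀ i, x i ∈ Set.Icc ((m i : ℝ) * 2 ^ (-k)) ((m i : ℝ) * 2 ^ (-k) + 2 ^ (-k))}

/-- Average of `f` over `Q`. -/
def avg (f : Eu n → ℝ) (Q : Set (Eu n)) : ℝ := ⨍ x in Q, f x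

/-- Mean oscillation of `f` over `Q`. -/
def mo (f : Eu n → ℝ) (Q : Set (Eu n)) : ℝ := ⨍ x in Q, |f x - avg f Q|

/-- The BMO seminorm of `f` over `U` (supremum over cubes contained in `U`). -/
def bmoSup (U : Set (Eu n)) (f : Eu n → ℝ) : ℝ≥0∞ :=
  ⨆ (a : Eu n) (l : ℝ) (_ : 0 < l) (_ : cube a l ⊆ U), ENNReal.ofReal (mo f (cube a l))

/-- The nonhomogeneous `bmo_lam` norm of `f` over `U`. -/
def bmoNorm (U : Set (Eu n)) (lam : ℝ) (f : Eu n → ℝ) : ℝ≥0∞ :=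
  (⨆ (a : Eu n) (l : ℝ) (_ : 0 < l) (_ : l < lam) (_ : cube a l ⊆ U),
      ENNReal.ofReal (mo f (cube a l))) +
  ⨆ (a : Eu n) (l : ℝ) (_ : lam ≤ l) (_ : cube a l ⊆ U),
      ENNReal.ofReal |avg f (cube a l)|

/-- `f ∈ bmo_lam(U)`: integrable on every cube contained in `U`, with finite norm. -/
def MemBmo (U : Set (Eu n)) (lam : ℝ) (f : Eu n → ℝ) : Prop :=
  (∀ (a : Eu n) (l : ℝ), 0 < l → cube a l ⊆ U → IntegrableOn f (cube a l)) ∧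
    bmoNorm U lam f < ⊤

/-- Distance between two sets. -/
def setDist (s t : Set (Eu n)) : ℝ := sInf (Set.image2 dist s t)

/-- A Whitney decomposition of an open set `O`, given as a set of
(lower corner, sidelength) pairs of closed dyadic cubes. -/
structure IsWhitney (O : Set (Eu n)) (W : Set (Eu n × ℝ)) : Prop where
  countable : W.Countable
  dyadic : ∀ q ∈ W, IsDyadic q.1 q.2
  disjointInteriors : ∀ q ∈ W, ∀ q' ∈ W, q ≠ q' →
    interior (cube q.1 q.2) ∩ interior (cube q'.1 q'.2) = ∅
  cover : ⋃ q ∈ W, cube q.1 q.2 = O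
  distLower : ∀ q ∈ W, q.2 ≤ setDist (cube q.1 q.2) (frontier O)
  distUpper : ∀ q ∈ W, setDist (cube q.1 q.2) (frontier O) ≤ 4 * Real.sqrt n * q.2
  sizes : ∀ q ∈ W, ∀ q' ∈ W, (cube q.1 q.2 ∩ cube q'.1 q'.2).Nonempty →
    q.2 / q'.2 ∈ Set.Icc (1/4 : ℝ) 4

/-- Extension hypothesis for `(Ω, lam, C)`: every `f ∈ bmo_lam(Ω)` admits an
extension `F` to `ℝⁿ` with `‖F‖_{BMO(ℝⁿ)} ≤ C ‖f‖_{bmo_lam(Ω)}`. -/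
def ExtHyp (Ω : Set (Eu n)) (lam C : ℝ) : Prop :=
  ∀ f : Eu n → ℝ, MemBmo Ω lam f → ∃ F : Eu n → ℝ,
    (∀ (a : Eu n) (l : ℝ), 0 < l → IntegrableOn F (cube a l)) ∧
    (∀ x ∈ Ω, F x = f x) ∧
    bmoSup Set.univ F ≤ ENNReal.ofReal C * bmoNorm Ω lam f

/-- The set `S_lam = {x ∈ Ω : d_Ω(x) ≥ lam/4}`. -/
def Slam (Ω : Set (Eu n)) (lam : ℝ) : Set (Eu n) := {x ∈ Ω | lam / 4 ≤ dOm Ω x}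

/-- `η_lam(x,y) = k_Ω(x, S_lam) + k_Ω(y, S_lam)`. -/
def etaLam (Ω : Set (Eu n)) (lam : ℝ) (x y : Eu n) : ℝ :=
  kDistSet Ω x (Slam Ω lam) + kDistSet Ω y (Slam Ω lam)

section Aux

variable {n : ℕ}

lemma coordDist_le (x y : Eu n) (i : Fin n) : dist (x i) (y i) ≤ dist x y := by
  rw [EuclideanSpace.dist_eq]
  have h1 : dist (x i) (y i) ^ 2 ≤ ∑ j, dist (x j) (y j) ^ 2 :=
    Finset.single_le_sum (f := fun j => dist (x j) (y j) ^ 2)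
      (fun j _ => sq_nonneg _) (Finset.mem_univ i)
  calc dist (x i) (y i) = Real.sqrt (dist (x i) (y i) ^ 2) := (Real.sqrt_sq dist_nonneg).symm
    _ ≤ _ := Real.sqrt_le_sqrt h1

lemma mem_interior_cube {a : Eu n} {l : ℝ} {c z : Eu n}
    (hc : ∀ i, c i = a i + l / 2) (hz : dist z c < l / 2) :
    z ∈ interior (cube a l) := by
  rw [mem_interior]
  refine ⟨Metric.ball z (l / 2 - dist z c), ?_, Metric.isOpen_ball,
    Metric.mem_ball_self (by linarith)⟩
  intro u hu i
  have h1 : dist (u i) (c i) ≤ dist u c := coordDist_le u c i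
  have h2 : dist u c ≤ dist u z + dist z c := dist_triangle u z c
  have hu' : dist u z < l / 2 - dist z c := Metric.mem_ball.mp hu
  have habs : |u i - (a i + l / 2)| ≤ l / 2 := by
    rw [← hc i, ← Real.dist_eq]; linarith
  obtain ⟨hL, hR⟩ := abs_le.mp habs
  exact ⟨by linarith, by linarith⟩

lemma frontier_ne {Ω : Set (Eu n)} (hΩ : IsDom Ω) : (frontier Ω).Nonempty := by
  haveI : PreconnectedSpace (Eu n) :=
    ⟨(convex_univ : Convex ℝ (Set.univ : Set (Eu n))).isPreconnected⟩
  exact nonempty_frontier_iff.mpr ⟨hΩ.2.1.nonempty, hΩ.2.2⟩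

lemma dOm_pos {Ω : Set (Eu n)} (hΩ : IsDom Ω) {x : Eu n} (hx : x ∈ Ω) : 0 < dOm Ω x := by
  rw [dOm]
  refine (isClosed_frontier.notMem_iff_infDist_pos (frontier_ne hΩ)).mp fun hxf => ?_
  exact Set.eq_empty_iff_forall_notMem.mp hΩ.1.inter_frontier_eq x ⟨hx, hxf⟩

lemma ball_dOm_subset {Ω : Set (Eu n)} (hO : IsOpen Ω) {x : Eu n} (hx : x ∈ Ω) :
    Metric.ball x (dOm Ω x) ⊆ Ω := by
  intro y hy
  by_contra hyΩ
  have hfr : ∀ z ∈ Metric.ball x (dOm Ω x), z ∉ frontier Ω := by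
    intro z hz hzf
    have h1 : dOm Ω x ≤ dist x z := Metric.infDist_le_dist_of_mem hzf
    have h2 : dist z x < dOm Ω x := Metric.mem_ball.mp hz
    rw [dist_comm] at h2; linarith
  have hpre : IsPreconnected (Metric.ball x (dOm Ω x)) := (convex_ball x _).isPreconnected
  have hsub : Metric.ball x (dOm Ω x) ⊆ Ω ∪ (closure Ω)ᶜ := by
    intro z hz
    by_cases h : z ∈ Ω
    · exact Or.inl h
    · exact Or.inr fun hcl => hfr z hz (by rw [hO.frontier_eq]; exact ⟨hcl, h⟩)
  have hr0 : 0 < dOm Ω x := lt_of_le_of_lt dist_nonneg (Metric.mem_ball.mp hy)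
  have hne := hpre Ω (closure Ω)ᶜ hO isClosed_closure.isOpen_compl hsub
    ⟨x, Metric.mem_ball_self hr0, hx⟩
    ⟨y, hy, fun hcl => hfr y hy (by rw [hO.frontier_eq]; exact ⟨hcl, hyΩ⟩)⟩
  obtain ⟨w, _, hw1, hw2⟩ := hne
  exact hw2 (subset_closure hw1)

lemma curve_half {Ω : Set (Eu n)} {γ : ℝ → Eu n} {x y : Eu n} (hC : IsCurve Ω γ x y) :
    ∃ t ∈ Set.Icc (0:ℝ) 1, dist (γ t) x = dist x y / 2 := by
  obtain ⟨K, hK⟩ := hC.lipschitz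
  have hcont : ContinuousOn (fun t => dist (γ t) x) (Set.Icc 0 1) :=
    (continuous_id.dist continuous_const).comp_continuousOn hK.continuousOn
  have hmem : dist x y / 2 ∈ Set.Icc (dist (γ 0) x) (dist (γ 1) x) := by
    rw [hC.source, hC.target, dist_self, dist_comm y x]
    exact ⟨by positivity, by linarith [dist_nonneg (x := x) (y := y)]⟩
  obtain ⟨t, ht, hft⟩ := intermediate_value_Icc zero_le_one hcont hmem
  exact ⟨t, ht, hft⟩

lemma key {Ω : Set (Eu n)} {ε δ : ℝ} (hε : 0 < ε)
    (hED : IsEpsDeltaDomain Ω ε δ) {x y : Eu n} (hx : x ∈ Ω) (hy : y ∈ Ω)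
    (hr0 : 0 < dist x y) (hrδ : dist x y < δ) :
    ∃ z : Eu n, dist z x = dist x y / 2 ∧ ε * dist x y / 4 ≤ dOm Ω z := by
  obtain ⟨γ, hC, _, hd⟩ := hED x hx y hy hrδ
  obtain ⟨t, ht, hft⟩ := curve_half hC
  refine ⟨γ t, hft, ?_⟩
  have h2 : dist x y / 2 ≤ dist (γ t) y := by
    have h3 := dist_triangle x (γ t) y
    rw [dist_comm x (γ t)] at h3
    linarith
  have hineq := hd t ht
  have h3 : ε * dist x y / 4 * dist x y ≤ ε * (dist (γ t) x * dist (γ t) y) := by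
    rw [hft]
    nlinarith [mul_nonneg (mul_nonneg hε.le (by linarith : (0:ℝ) ≤ dist x y / 2))
      (by linarith : (0:ℝ) ≤ dist (γ t) y - dist x y / 2)]
  have h4 : ε * dist x y / 4 ≤ ε * (dist (γ t) x * dist (γ t) y) / dist x y := by
    rw [le_div_iff₀ hr0]
    exact h3
  linarith [hineq]

lemma eps_bound {Ω : Set (Eu n)} (hn : 1 ≤ n) (hΩ : IsDom Ω) {ε δ : ℝ} (hε : 0 < ε)
    (hδ : 0 < δ) (hED : IsEpsDeltaDomain Ω ε δ) : ε ≤ 58 / 9 := by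
  obtain ⟨w, hw⟩ := frontier_ne hΩ
  obtain ⟨x, hxΩ, hxw⟩ := Metric.mem_closure_iff.mp (frontier_subset_closure hw) δ hδ
  set d := dOm Ω x with hdd
  have hd0 : 0 < d := dOm_pos hΩ hxΩ
  have hdδ : d < δ := by
    have h1 : d ≤ dist x w := Metric.infDist_le_dist_of_mem hw
    rw [dist_comm] at h1
    linarith
  set e : Eu n := EuclideanSpace.single (⟨0, hn⟩ : Fin n) (1:ℝ) with he
  set y : Eu n := x + (9 / 10 * d) • e with hy
  have hxy : dist x y = 9 / 10 * d := by
    rw [hy, dist_comm, dist_self_add_left, norm_smul, he, EuclideanSpace.norm_single,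
      Real.norm_eq_abs, Real.norm_eq_abs, abs_one, mul_one, abs_of_nonneg (by linarith)]
  have hyΩ : y ∈ Ω := by
    apply ball_dOm_subset hΩ.1 hxΩ
    rw [Metric.mem_ball, dist_comm, hxy]
    linarith
  obtain ⟨z, hz1, hz2⟩ := key hε hED hxΩ hyΩ (by rw [hxy]; positivity) (by rw [hxy]; linarith)
  have hup : dOm Ω z ≤ d + dist z x := Metric.infDist_le_infDist_add_dist
  rw [hz1, hxy] at hup
  rw [hxy] at hz2
  by_contra hcon
  push_neg at hcon
  nlinarith [mul_lt_mul_of_pos_right hcon hd0]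

end Aux

set_option maxHeartbeats 1000000 in
/-- in an `(ε,δ)`-domain, every dyadic cube of sidelength `< δ`
contains an interior point far from the boundary. -/
theorem stmt_5 (n : ℕ) (hn : 1 ≤ n) (Ω : Set (Eu n)) (hΩ : IsDom Ω)
    (ε δ : ℝ) (hε : 0 < ε) (hδ : 0 < δ) (hED : IsEpsDeltaDomain Ω ε δ)
    (a : Eu n) (l : ℝ) (hdy : IsDyadic a l) (hl : l < δ) :
    ∃ z ∈ interior (cube a l), ε * l / 32 ≤ dOm Ω z := by
  obtain ⟨k, mI, hlk, -⟩ := hdy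
  have hl0 : 0 < l := by rw [hlk]; positivity
  by_cases hcase : ∃ z ∈ interior (cube a l), ε * l / 32 ≤ dOm Ω z
  · exact hcase
  exfalso
  push_neg at hcase
  have hεb : ε ≤ 58 / 9 := eps_bound hn hΩ hε hδ hED
  have hεl : ε * l ≤ (58 / 9) * l := mul_le_mul_of_nonneg_right hεb hl0.le
  set c : Eu n := WithLp.toLp 2 (fun i => a i + l / 2 : Fin n → ℝ) with hcdef
  have hc : ∀ i, c i = a i + l / 2 := fun i => rfl
  set e : Eu n := EuclideanSpace.single (⟨0, hn⟩ : Fin n) (1:ℝ) with he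
  set p : Eu n := c + (15 * l / 32) • e with hp
  have hpc : dist p c = 15 * l / 32 := by
    rw [hp, dist_self_add_left, norm_smul, he, EuclideanSpace.norm_single]
    rw [Real.norm_eq_abs, Real.norm_eq_abs, abs_one, mul_one, abs_of_nonneg (by positivity)]
  have hcmem : c ∈ interior (cube a l) := mem_interior_cube hc (by rw [dist_self]; linarith)
  have hpmem : p ∈ interior (cube a l) := mem_interior_cube hc (by rw [hpc]; linarith)
  have hfr := frontier_ne hΩ
  obtain ⟨w₁, hw₁f, hw₁⟩ := (Metric.infDist_lt_iff hfr).mp (hcase c hcmem)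
  obtain ⟨w₂, hw₂f, hw₂⟩ := (Metric.infDist_lt_iff hfr).mp (hcase p hpmem)
  obtain ⟨x₁, hx₁Ω, hwx₁⟩ := Metric.mem_closure_iff.mp (frontier_subset_closure hw₁f)
    (l / 10000) (by positivity)
  obtain ⟨x₂, hx₂Ω, hwx₂⟩ := Metric.mem_closure_iff.mp (frontier_subset_closure hw₂f)
    (l / 10000) (by positivity)
  have hx₁c : dist x₁ c ≤ ε * l / 32 + l / 10000 := by
    calc dist x₁ c ≤ dist x₁ w₁ + dist w₁ c := dist_triangle _ _ _
      _ ≤ ε * l / 32 + l / 10000 := by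
          rw [dist_comm x₁ w₁, dist_comm w₁ c]; linarith
  have hx₂p : dist x₂ p ≤ ε * l / 32 + l / 10000 := by
    calc dist x₂ p ≤ dist x₂ w₂ + dist w₂ p := dist_triangle _ _ _
      _ ≤ ε * l / 32 + l / 10000 := by
          rw [dist_comm x₂ w₂, dist_comm w₂ p]; linarith
  set r := dist x₁ x₂ with hrdef
  have hrup : r ≤ 15 * l / 32 + 2 * (ε * l / 32) + 2 * (l / 10000) := by
    calc r ≤ dist x₁ c + dist c x₂ := dist_triangle _ _ _
      _ ≤ dist x₁ c + (dist c p + dist p x₂) := by linarith [dist_triangle c p x₂]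
      _ ≤ _ := by
          rw [dist_comm c p, dist_comm p x₂]; linarith
  have hrlow : 15 * l / 32 ≤ r + 2 * (ε * l / 32) + 2 * (l / 10000) := by
    have h1 : dist c p ≤ dist c x₁ + dist x₁ x₂ + dist x₂ p := by
      linarith [dist_triangle c x₁ p, dist_triangle x₁ x₂ p]
    rw [dist_comm c p, hpc, dist_comm c x₁] at h1
    linarith
  have hr0 : 0 < r := by linarith
  have hrδ : r < δ := by linarith
  obtain ⟨z, hz1, hz2⟩ := key hε hED hx₁Ω hx₂Ω hr0 hrδ
  have hdx₁ : dOm Ω x₁ ≤ l / 10000 := by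
    have h1 : dOm Ω x₁ ≤ dist x₁ w₁ := Metric.infDist_le_dist_of_mem hw₁f
    rw [dist_comm] at h1
    linarith
  have hzup : dOm Ω z ≤ dOm Ω x₁ + dist z x₁ := Metric.infDist_le_infDist_add_dist
  rw [hz1] at hzup
  -- refined bound on ε
  have hε2 : ε ≤ 201 / 100 := by
    by_contra hcon
    push_neg at hcon
    have hA : ε * r / 4 ≤ l / 10000 + r / 2 := by linarith
    -- (ε - 2) * r < l / 2500, r ≥ 15l/32 - 2*(58/9)l/32 - l/5000
    nlinarith [mul_lt_mul_of_pos_right hcon hr0, hl0, hεl]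
  have hεl2 : ε * l ≤ (201 / 100) * l := mul_le_mul_of_nonneg_right hε2 hl0.le
  -- z lies in the interior of the cube
  have hzc : dist z c < l / 2 := by
    have h1 : dist z c ≤ dist z x₁ + dist x₁ c := dist_triangle _ _ _
    rw [hz1] at h1
    linarith
  have hzint : z ∈ interior (cube a l) := mem_interior_cube hc hzc
  have hzlt := hcase z hzint
  -- now ε * r / 4 ≤ dOm z < ε * l / 32 while r ≥ l / 8
  have hrbig : l / 8 ≤ r := by linarith
  have : ε * l / 32 ≤ ε * r / 4 := by
    nlinarith [mul_nonneg hε.le (show (0:ℝ) ≤ r / 4 - l / 32 by linarith)]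
  linarith
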